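/- arXiv:2202.07753 — 3 statements merged into one kernel-verified Lean document; each statement's English description precedes it below -/
import Mathlib

section
/- Under assumptions (A1) and (A2), suppose for each (x,μ) that π(·;x,μ) is an invariant probability measure of L_{x,μ} having finite moments of every order. Let h : ℝ^d×ℝ^d×P₂(ℝ^d) → ℝ be jointly continuous and grow at most polynomially in y uniformly in (x,μ), and set h̄(x,μ) = ∫ h(x,y,μ) π(dy;x,μ). Fix (x,μ₂) and let v be a function such that y ↦ v(x,y,μ₂) is C², v, ∇_y v and ∇²_y v grow at most polynomially in y, and L_{x,μ₂}v(x,y,μ₂) = h(x,y,μ₂) − h̄(x,μ₂) for all y. Then for every μ₁ ∈ P₂(ℝ^d): ∫ h(x,y,μ₁) π(dy;x,μ₁) − ∫ h(x,y,μ₂) π(dy;x,μ₂) = ∫ [ h(x,y,μ₁) − h(x,y,μ₂) − (L_{x,μ₁} − L_{x,μ₂}) v(x,y,μ₂) ] π(dy;x,μ₁). Analogously, if v solves the Poisson equation at a fixed (x₂,μ) with the same regularity and growth, then for every x₁ ∈ ℝ^d: ∫ h(x₁,y,μ) π(dy;x₁,μ) − ∫ h(x₂,y,μ) π(dy;x₂,μ)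 = ∫ [ h(x₁,y,μ) − h(x₂,y,μ) − (L_{x₁,μ} − L_{x₂,μ}) v(x₂,y,μ) ] π(dy;x₁,μ). -/
open MeasureTheory

noncomputable section

/-- First partial derivative of `φ : ℝ^d → ℝ` in the `i`-th coordinate direction. -/
def pd1 {d : ℕ} (φ : (Fin d → ℝ) → ℝ) (y : Fin d → ℝ) (i : Fin d) : ℝ :=
  fderiv ℝ φ y (Pi.single i 1)

/-- Second partial derivative of `φ : ℝ^d → ℝ` in the coordinate directions `i, j`. -/
def pd2 {d : ℕ} (φ : (Fin d → ℝ) → ℝ) (y : Fin d → ℝ) (i j : Fin d) : ℝ :=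
  fderiv ℝ (fun z => fderiv ℝ φ z (Pi.single j 1)) y (Pi.single i 1)

/-- The frozen generator `L φ (y) = f(y)·∇φ(y) + a(y):∇²φ(y)`. -/
def genL {d : ℕ} (f : (Fin d → ℝ) → Fin d → ℝ) (a : (Fin d → ℝ) → Fin d → Fin d → ℝ)
    (φ : (Fin d → ℝ) → ℝ) (y : Fin d → ℝ) : ℝ :=
  (∑ i, f y i * pd1 φ y i) + ∑ i, ∑ j, a y i j * pd2 φ y i j

/-- `C_b²` functions: twice continuously differentiable, bounded together with the
first and second derivatives. -/
def CbTwo {d : ℕ} (φ : (Fin d → ℝ) → ℝ) : Prop :=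
  ContDiff ℝ 2 φ ∧ ∃ K : ℝ, ∀ y, |φ y| ≤ K ∧
    ‖iteratedFDeriv ℝ 1 φ y‖ ≤ K ∧ ‖iteratedFDeriv ℝ 2 φ y‖ ≤ K

/-- An invariant probability measure of the frozen generator:
`∫ L φ dπ = 0` for every `φ ∈ C_b²`. -/
def IsInvariantMeasure {d : ℕ} (f : (Fin d → ℝ) → Fin d → ℝ)
    (a : (Fin d → ℝ) → Fin d → Fin d → ℝ) (π : Measure (Fin d → ℝ)) : Prop :=
  IsProbabilityMeasure π ∧
    ∀ φ : (Fin d → ℝ) → ℝ, CbTwo φ → ∫ y, genL f a φ y ∂π = 0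

/-- `P₂(ℝ^d)`: Borel probability measures on `ℝ^d` with finite second moment.
Its elements enter only as parameters. -/
def ProbMeas2 (d : ℕ) : Type :=
  {μ : Measure (Fin d → ℝ) // IsProbabilityMeasure μ ∧ Integrable (fun y => ‖y‖ ^ 2) μ}

/-- Assumption (A1): uniform ellipticity and boundedness of the symmetric diffusion
matrix `a`, two bounded `y`-derivatives, and uniform Hölder continuity in `y` of `a`
and these derivatives.  The parameter `p` ranges over the frozen data `(x, μ)`. -/
def AssumptionA1 {d : ℕ} {I : Type*} (a : I → (Fin d → ℝ) → Fin d → Fin d → ℝ) : Prop :=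
  (∀ p y i j, a p y i j = a p y j i) ∧
  (∃ lm lp : ℝ, 0 < lm ∧ lm ≤ lp ∧ ∀ p y (ξ : Fin d → ℝ),
      lm * ∑ i, ξ i ^ 2 ≤ 2 * ∑ i, ∑ j, ξ i * a p y i j * ξ j ∧
      2 * ∑ i, ∑ j, ξ i * a p y i j * ξ j ≤ lp * ∑ i, ξ i ^ 2) ∧
  (∃ K : ℝ, ∀ p y i j, |a p y i j| ≤ K) ∧
  (∀ p i j, ContDiff ℝ 2 (fun y => a p y i j)) ∧
  (∃ K : ℝ, ∀ p y i j,
      ‖iteratedFDeriv ℝ 1 (fun z => a p z i j) y‖ ≤ K ∧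
      ‖iteratedFDeriv ℝ 2 (fun z => a p z i j) y‖ ≤ K) ∧
  (∃ K θ : ℝ, 0 < θ ∧ θ ≤ 1 ∧ ∀ p y y' i j,
      |a p y i j - a p y' i j| ≤ K * ‖y - y'‖ ^ θ ∧
      ‖iteratedFDeriv ℝ 1 (fun z => a p z i j) y -
        iteratedFDeriv ℝ 1 (fun z => a p z i j) y'‖ ≤ K * ‖y - y'‖ ^ θ ∧
      ‖iteratedFDeriv ℝ 2 (fun z => a p z i j) y -
        iteratedFDeriv ℝ 2 (fun z => a p z i j) y'‖ ≤ K * ‖y - y'‖ ^ θ)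

/-- Assumption (A2): dissipativity and linear growth of the drift `f`, two bounded
`y`-derivatives, and uniform Hölder continuity in `y` of `f` and these derivatives.
The parameter `p` ranges over the frozen data `(x, μ)`. -/
def AssumptionA2 {d : ℕ} {I : Type*} (f : I → (Fin d → ℝ) → Fin d → ℝ) : Prop :=
  (∃ β C : ℝ, 0 < β ∧ 0 < C ∧ ∀ p y,
      (∑ i, f p y i * y i) ≤ -β * (∑ i, y i ^ 2) + C) ∧
  (∃ C : ℝ, ∀ p y, ‖f p y‖ ≤ C * (1 + ‖y‖)) ∧
  (∀ p i, ContDiff ℝ 2 (fun y => f p y i)) ∧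
  (∃ K : ℝ, ∀ p y i,
      ‖iteratedFDeriv ℝ 1 (fun z => f p z i) y‖ ≤ K ∧
      ‖iteratedFDeriv ℝ 2 (fun z => f p z i) y‖ ≤ K) ∧
  (∃ K θ : ℝ, 0 < θ ∧ θ ≤ 1 ∧ ∀ p y y' i,
      |f p y i - f p y' i| ≤ K * ‖y - y'‖ ^ θ ∧
      ‖iteratedFDeriv ℝ 1 (fun z => f p z i) y -
        iteratedFDeriv ℝ 1 (fun z => f p z i) y'‖ ≤ K * ‖y - y'‖ ^ θ ∧
      ‖iteratedFDeriv ℝ 2 (fun z => f p z i) y -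
        iteratedFDeriv ℝ 2 (fun z => f p z i) y'‖ ≤ K * ‖y - y'‖ ^ θ)


section Helpers
variable {d : ℕ}

lemma abs_pd1_le (φ : (Fin d → ℝ) → ℝ) (y : Fin d → ℝ) (i : Fin d) :
    |pd1 φ y i| ≤ ‖iteratedFDeriv ℝ 1 φ y‖ := by
  have h1 : ‖fderiv ℝ φ y‖ = ‖iteratedFDeriv ℝ 1 φ y‖ := by
    rw [← norm_iteratedFDeriv_fderiv (n := 0), norm_iteratedFDeriv_zero]
  have h2 : |pd1 φ y i| ≤ ‖fderiv ℝ φ y‖ * ‖(Pi.single i (1:ℝ) : Fin d → ℝ)‖ := by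
    rw [← Real.norm_eq_abs]
    exact (fderiv ℝ φ y).le_opNorm _
  rwa [Pi.norm_single, norm_one, mul_one, h1] at h2

lemma abs_pd2_le {φ : (Fin d → ℝ) → ℝ} (hφ : ContDiff ℝ 2 φ) (y : Fin d → ℝ) (i j : Fin d) :
    |pd2 φ y i j| ≤ ‖iteratedFDeriv ℝ 2 φ y‖ := by
  have hdf : DifferentiableAt ℝ (fderiv ℝ φ) y :=
    ((hφ.fderiv_right (m := 1) (by norm_num)).differentiable one_ne_zero).differentiableAt
  have key : pd2 φ y i j =
      iteratedFDeriv ℝ 2 φ y ![Pi.single i 1, Pi.single j 1] := by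
    rw [iteratedFDeriv_two_apply]
    unfold pd2
    rw [fderiv_clm_apply hdf (differentiableAt_const _)]
    simp
  rw [key, ← Real.norm_eq_abs]
  have := (iteratedFDeriv ℝ 2 φ y).le_opNorm ![Pi.single i 1, Pi.single j 1]
  have hprod : (∏ k : Fin 2, ‖(![Pi.single i 1, Pi.single j 1] : Fin 2 → Fin d → ℝ) k‖) = 1 := by
    simp [Fin.prod_univ_two, Pi.norm_single]
  rw [hprod, mul_one] at this
  exact this

lemma continuous_pd1 {φ : (Fin d → ℝ) → ℝ} (hφ : ContDiff ℝ 2 φ) (i : Fin d) :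
    Continuous fun y => pd1 φ y i :=
  (hφ.continuous_fderiv (by norm_num)).clm_apply continuous_const

lemma contDiff_dfc {φ : (Fin d → ℝ) → ℝ} (hφ : ContDiff ℝ 2 φ) (c : Fin d → ℝ) :
    ContDiff ℝ 1 fun z => fderiv ℝ φ z c :=
  (hφ.fderiv_right (by norm_num)).clm_apply contDiff_const

lemma continuous_pd2 {φ : (Fin d → ℝ) → ℝ} (hφ : ContDiff ℝ 2 φ) (i j : Fin d) :
    Continuous fun y => pd2 φ y i j :=
  ((contDiff_dfc hφ _).continuous_fderiv one_ne_zero).clm_apply continuous_const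

lemma continuous_genL {f : (Fin d → ℝ) → Fin d → ℝ} {a : (Fin d → ℝ) → Fin d → Fin d → ℝ}
    {φ : (Fin d → ℝ) → ℝ} (hf : ∀ i, Continuous fun y => f y i)
    (ha : ∀ i j, Continuous fun y => a y i j) (hφ : ContDiff ℝ 2 φ) :
    Continuous (genL f a φ) := by
  unfold genL
  exact (continuous_finset_sum _ fun i _ => (hf i).mul (continuous_pd1 hφ i)).add
    (continuous_finset_sum _ fun i _ => continuous_finset_sum _ fun j _ =>
      (ha i j).mul (continuous_pd2 hφ i j))

lemma abs_genL_le {f : (Fin d → ℝ) → Fin d → ℝ} {a : (Fin d → ℝ) → Fin d → Fin d → ℝ}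
    {φ : (Fin d → ℝ) → ℝ} (hφ : ContDiff ℝ 2 φ)
    {Cf Ca : ℝ} (hCf : 0 ≤ Cf) (hCa : 0 ≤ Ca)
    (hf : ∀ y i, |f y i| ≤ Cf * (1 + ‖y‖)) (ha : ∀ y i j, |a y i j| ≤ Ca)
    {B : (Fin d → ℝ) → ℝ}
    (h1 : ∀ y, ‖iteratedFDeriv ℝ 1 φ y‖ ≤ B y) (h2 : ∀ y, ‖iteratedFDeriv ℝ 2 φ y‖ ≤ B y)
    (y : Fin d → ℝ) :
    |genL f a φ y| ≤ (d : ℝ) * (Cf * (1 + ‖y‖) * B y) + (d : ℝ)^2 * (Ca * B y) := by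
  have hB : 0 ≤ B y := le_trans (norm_nonneg _) (h1 y)
  have t1 : |∑ i, f y i * pd1 φ y i| ≤ (d : ℝ) * (Cf * (1 + ‖y‖) * B y) := by
    calc |∑ i, f y i * pd1 φ y i| ≤ ∑ i, |f y i * pd1 φ y i| :=
          Finset.abs_sum_le_sum_abs _ _
    _ ≤ ∑ _i : Fin d, Cf * (1 + ‖y‖) * B y := by
        refine Finset.sum_le_sum fun i _ => ?_
        rw [abs_mul]
        exact mul_le_mul (hf y i) ((abs_pd1_le φ y i).trans (h1 y)) (abs_nonneg _)
          (mul_nonneg hCf (by positivity))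
    _ = (d : ℝ) * (Cf * (1 + ‖y‖) * B y) := by
        rw [Finset.sum_const, Finset.card_univ, Fintype.card_fin, nsmul_eq_mul]
  have t2 : |∑ i, ∑ j, a y i j * pd2 φ y i j| ≤ (d : ℝ)^2 * (Ca * B y) := by
    calc |∑ i, ∑ j, a y i j * pd2 φ y i j| ≤ ∑ i, |∑ j, a y i j * pd2 φ y i j| :=
          Finset.abs_sum_le_sum_abs _ _
    _ ≤ ∑ _i : Fin d, ∑ _j : Fin d, Ca * B y := by
        refine Finset.sum_le_sum fun i _ => ?_
        refine (Finset.abs_sum_le_sum_abs _ _).trans ?_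
        refine Finset.sum_le_sum fun j _ => ?_
        rw [abs_mul]
        exact mul_le_mul (ha y i j) ((abs_pd2_le hφ y i j).trans (h2 y)) (abs_nonneg _) hCa
    _ = (d : ℝ)^2 * (Ca * B y) := by
        rw [Finset.sum_const, Finset.sum_const, Finset.card_univ, Fintype.card_fin,
          nsmul_eq_mul, nsmul_eq_mul]
        ring
  calc |genL f a φ y| ≤ |∑ i, f y i * pd1 φ y i| + |∑ i, ∑ j, a y i j * pd2 φ y i j| :=
        abs_add_le _ _
  _ ≤ _ := add_le_add t1 t2

lemma integrable_poly {π : Measure (Fin d → ℝ)} (hmom : ∀ q : ℕ, Integrable (fun y => ‖y‖^q) π)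
    {g : (Fin d → ℝ) → ℝ} (hg : Continuous g) {K : ℝ} {q : ℕ}
    (hb : ∀ y, |g y| ≤ K * (1 + ‖y‖^q)) : Integrable g π := by
  have h1 : Integrable (fun _ : Fin d → ℝ => (1:ℝ)) π := by simpa using hmom 0
  refine ((h1.add (hmom q)).const_mul K).mono' hg.aestronglyMeasurable ?_
  filter_upwards with y
  rw [Real.norm_eq_abs]
  exact hb y

end Helpers

section Chi
variable {d : ℕ}

/-- squared euclidean norm -/
def sqn (y : Fin d → ℝ) : ℝ := ∑ i, (y i)^2

lemma contDiff_sqn : ContDiff ℝ 2 (sqn (d := d)) := by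
  unfold sqn
  exact ContDiff.sum fun i _ => ((ContinuousLinearMap.proj i :
    (Fin d → ℝ) →L[ℝ] ℝ).contDiff).pow 2

lemma sqn_nonneg (y : Fin d → ℝ) : 0 ≤ sqn y :=
  Finset.sum_nonneg fun i _ => sq_nonneg _

lemma sqn_smul (c : ℝ) (y : Fin d → ℝ) : sqn (c • y) = c^2 * sqn y := by
  unfold sqn
  rw [Finset.mul_sum]
  refine Finset.sum_congr rfl fun i _ => ?_
  simp [mul_pow]

lemma sqn_ge (y : Fin d → ℝ) (i : Fin d) : (y i)^2 ≤ sqn y :=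
  Finset.single_le_sum (f := fun i => (y i)^2) (fun i _ => sq_nonneg _) (Finset.mem_univ i)

/-- cutoff -/
def chi (y : Fin d → ℝ) : ℝ := Real.smoothTransition ((4 - sqn y)/3)

lemma contDiff_chi : ContDiff ℝ 2 (chi (d := d)) :=
  (Real.smoothTransition.contDiff (n := 2)).comp ((contDiff_const.sub contDiff_sqn).div_const 3)

lemma chi_one {y : Fin d → ℝ} (h : sqn y ≤ 1) : chi y = 1 :=
  Real.smoothTransition.one_of_one_le (by linarith)

lemma chi_zero {y : Fin d → ℝ} (h : 4 ≤ sqn y) : chi y = 0 :=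
  Real.smoothTransition.zero_of_nonpos (by linarith)

lemma chi_zero' {y : Fin d → ℝ} (h : 2 < ‖y‖) : chi y = 0 := by
  by_contra hne
  apply absurd h
  push_neg
  rw [show (2:ℝ) = max 2 0 by simp]
  refine pi_norm_le_iff_of_nonneg (by positivity) |>.mpr fun i => ?_
  rw [Real.norm_eq_abs]
  simp only [max_eq_left (by norm_num : (0:ℝ) ≤ 2)]
  by_contra habs
  push_neg at habs
  have h4 : 4 < (y i)^2 := by nlinarith [abs_nonneg (y i), sq_abs (y i)]
  exact hne (chi_zero ((by linarith [sqn_ge y i]) : 4 ≤ sqn y))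

lemma hasCompactSupport_chi : HasCompactSupport (chi (d := d)) := by
  refine HasCompactSupport.intro (isCompact_closedBall 0 2) fun y hy => ?_
  rw [Metric.mem_closedBall, not_le, dist_zero_right] at hy
  exact chi_zero' hy

lemma chi_nonneg (y : Fin d → ℝ) : 0 ≤ chi y := Real.smoothTransition.nonneg _
lemma chi_le_one (y : Fin d → ℝ) : chi y ≤ 1 := Real.smoothTransition.le_one _

/-- scaling CLM -/
def scl (d : ℕ) (n : ℕ) : (Fin d → ℝ) →L[ℝ] (Fin d → ℝ) :=
  (((n : ℝ) + 1)⁻¹) • ContinuousLinearMap.id ℝ (Fin d → ℝ)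

lemma scl_apply (n : ℕ) (y : Fin d → ℝ) : scl d n y = ((n : ℝ) + 1)⁻¹ • y := rfl

lemma scl_norm_le (n : ℕ) : ‖scl d n‖ ≤ 1 := by
  unfold scl
  refine (norm_smul (((n:ℝ)+1)⁻¹) (ContinuousLinearMap.id ℝ (Fin d → ℝ))).le.trans ?_
  have h1 : ‖((n : ℝ) + 1)⁻¹‖ ≤ 1 := by
    rw [Real.norm_eq_abs, abs_inv, abs_of_nonneg (by positivity)]
    rw [inv_le_one_iff₀]
    right; linarith [Nat.cast_nonneg (α := ℝ) n]
  calc ‖((n : ℝ) + 1)⁻¹‖ * ‖ContinuousLinearMap.id ℝ (Fin d → ℝ)‖ ≤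
      1 * 1 := mul_le_mul h1 (ContinuousLinearMap.norm_id_le) (norm_nonneg _) zero_le_one
  _ = 1 := by ring

/-- the n-th cutoff -/
def chin (d : ℕ) (n : ℕ) : (Fin d → ℝ) → ℝ := chi ∘ (scl d n)

lemma contDiff_chin (n : ℕ) : ContDiff ℝ 2 (chin d n) :=
  contDiff_chi.comp (scl d n).contDiff

lemma chin_bound : ∃ M : ℝ, 1 ≤ M ∧ ∀ (n : ℕ) (y : Fin d → ℝ) (k : ℕ), k ≤ 2 →
    ‖iteratedFDeriv ℝ k (chin d n) y‖ ≤ M := by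
  obtain ⟨M0, hM0⟩ := (hasCompactSupport_chi.iteratedFDeriv 0).exists_bound_of_continuous
    ((contDiff_chi (d := d)).continuous_iteratedFDeriv (by norm_num))
  obtain ⟨M1, hM1⟩ := (hasCompactSupport_chi.iteratedFDeriv 1).exists_bound_of_continuous
    ((contDiff_chi (d := d)).continuous_iteratedFDeriv (by norm_num))
  obtain ⟨M2, hM2⟩ := (hasCompactSupport_chi.iteratedFDeriv 2).exists_bound_of_continuous
    ((contDiff_chi (d := d)).continuous_iteratedFDeriv (by norm_num))
  have key : ∀ (k : ℕ) (Mk : ℝ), (k : WithTop ℕ∞) ≤ 2 → (∀ z, ‖iteratedFDeriv ℝ k (chi (d := d)) z‖ ≤ Mk) →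
      ∀ (n : ℕ) (y : Fin d → ℝ), ‖iteratedFDeriv ℝ k (chin d n) y‖ ≤ Mk := by
    intro k Mk hk hMk n y
    have hMk0 : 0 ≤ Mk := (norm_nonneg _).trans (hMk 0)
    unfold chin
    rw [(scl d n).iteratedFDeriv_comp_right contDiff_chi y hk]
    refine (ContinuousMultilinearMap.norm_compContinuousLinearMap_le _ _).trans ?_
    calc ‖iteratedFDeriv ℝ k (chi (d := d)) (scl d n y)‖ * ∏ _i : Fin k, ‖scl d n‖ ≤
        Mk * 1 := by
          refine mul_le_mul (hMk _) ?_ (Finset.prod_nonneg fun _ _ => norm_nonneg _) hMk0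
          exact Finset.prod_le_one (fun _ _ => norm_nonneg _) (fun _ _ => scl_norm_le n)
    _ = Mk := mul_one Mk
  refine ⟨max 1 (max M0 (max M1 M2)), le_max_left _ _, fun n y k hk => ?_⟩
  interval_cases k
  · exact (key 0 M0 (by norm_num) hM0 n y).trans ((le_max_left _ _).trans (le_max_right _ _))
  · exact (key 1 M1 (by norm_num) hM1 n y).trans
      (((le_max_left _ _).trans (le_max_right _ _)).trans (le_max_right _ _))
  · exact (key 2 M2 (by norm_num) hM2 n y).trans
      (((le_max_right _ _).trans (le_max_right _ _)).trans (le_max_right _ _))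
end Chi


section LemmaA
variable {d : ℕ}

lemma integral_genL_eq_zero (hd : 0 < d)
    {f : (Fin d → ℝ) → Fin d → ℝ} {a : (Fin d → ℝ) → Fin d → Fin d → ℝ}
    {π : Measure (Fin d → ℝ)}
    (hinv : IsInvariantMeasure f a π)
    (hmom : ∀ q : ℕ, Integrable (fun y => ‖y‖ ^ q) π)
    (hfc : ∀ i, Continuous fun y => f y i)
    {Cf : ℝ} (hCf : 0 ≤ Cf) (hfg : ∀ y i, |f y i| ≤ Cf * (1 + ‖y‖))
    (hac : ∀ i j, Continuous fun y => a y i j)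
    {Ca : ℝ} (hCa : 0 ≤ Ca) (hag : ∀ y i j, |a y i j| ≤ Ca)
    {v : (Fin d → ℝ) → ℝ} (hv : ContDiff ℝ 2 v)
    {K : ℝ} {q : ℕ} (hK : 0 ≤ K)
    (hvg : ∀ y, |v y| ≤ K * (1 + ‖y‖^q) ∧ ‖iteratedFDeriv ℝ 1 v y‖ ≤ K * (1 + ‖y‖^q) ∧
      ‖iteratedFDeriv ℝ 2 v y‖ ≤ K * (1 + ‖y‖^q)) :
    Integrable (genL f a v) π ∧ ∫ y, genL f a v y ∂π = 0 := by
  haveI : IsProbabilityMeasure π := hinv.1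
  obtain ⟨M, hM1, hM⟩ := chin_bound (d := d)
  have hM0 : (0:ℝ) ≤ M := zero_le_one.trans hM1
  set w : ℕ → (Fin d → ℝ) → ℝ := fun n y => v y * chin d n y with hwdef
  have hwcd : ∀ n, ContDiff ℝ 2 (w n) := fun n => hv.mul (contDiff_chin n)
  set Bv : (Fin d → ℝ) → ℝ := fun y => 4 * (K * M) * (1 + ‖y‖^q) with hBvdef
  have hvB : ∀ (k : ℕ), k ≤ 2 → ∀ y, ‖iteratedFDeriv ℝ k v y‖ ≤ K * (1 + ‖y‖^q) := by
    intro k hk y; interval_cases k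
    · rw [norm_iteratedFDeriv_zero, Real.norm_eq_abs]; exact (hvg y).1
    · exact (hvg y).2.1
    · exact (hvg y).2.2
  have hKX : ∀ y : Fin d → ℝ, (0:ℝ) ≤ K * (1 + ‖y‖^q) :=
    fun y => mul_nonneg hK (by positivity)
  have h1w : ∀ n y, ‖iteratedFDeriv ℝ 1 (w n) y‖ ≤ Bv y := by
    intro n y
    have hle := norm_iteratedFDeriv_mul_le (𝕜 := ℝ) hv (contDiff_chin n) y
      (n := 1) (by norm_num)
    rw [Finset.sum_range_succ, Finset.sum_range_succ, Finset.sum_range_zero] at hle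
    have t0 : ‖iteratedFDeriv ℝ 0 v y‖ * ‖iteratedFDeriv ℝ (1-0) (chin d n) y‖ ≤
        (K * (1 + ‖y‖^q)) * M :=
      mul_le_mul (hvB 0 (by norm_num) y) (hM n y 1 (by norm_num)) (norm_nonneg _) (hKX y)
    have t1 : ‖iteratedFDeriv ℝ 1 v y‖ * ‖iteratedFDeriv ℝ (1-1) (chin d n) y‖ ≤
        (K * (1 + ‖y‖^q)) * M :=
      mul_le_mul (hvB 1 (by norm_num) y) (hM n y 0 (by norm_num)) (norm_nonneg _) (hKX y)
    have hKM : (0:ℝ) ≤ (K * (1 + ‖y‖^q)) * M := mul_nonneg (hKX y) hM0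
    refine hle.trans ?_
    simp only [Nat.choose_self, Nat.choose_zero_right, Nat.cast_one, one_mul, zero_add]
    show ‖iteratedFDeriv ℝ 0 v y‖ * ‖iteratedFDeriv ℝ (1-0) (chin d n) y‖ +
      ‖iteratedFDeriv ℝ 1 v y‖ * ‖iteratedFDeriv ℝ (1-1) (chin d n) y‖ ≤ Bv y
    have : Bv y = 4 * ((K * (1 + ‖y‖^q)) * M) := by rw [hBvdef]; ring
    rw [this]; linarith
  have h2w : ∀ n y, ‖iteratedFDeriv ℝ 2 (w n) y‖ ≤ Bv y := by
    intro n y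
    have hle := norm_iteratedFDeriv_mul_le (𝕜 := ℝ) hv (contDiff_chin n) y
      (n := 2) (by norm_num)
    rw [Finset.sum_range_succ, Finset.sum_range_succ, Finset.sum_range_succ,
      Finset.sum_range_zero] at hle
    have t0 : ‖iteratedFDeriv ℝ 0 v y‖ * ‖iteratedFDeriv ℝ (2-0) (chin d n) y‖ ≤
        (K * (1 + ‖y‖^q)) * M :=
      mul_le_mul (hvB 0 (by norm_num) y) (hM n y 2 (by norm_num)) (norm_nonneg _) (hKX y)
    have t1 : ‖iteratedFDeriv ℝ 1 v y‖ * ‖iteratedFDeriv ℝ (2-1) (chin d n) y‖ ≤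
        (K * (1 + ‖y‖^q)) * M :=
      mul_le_mul (hvB 1 (by norm_num) y) (hM n y 1 (by norm_num)) (norm_nonneg _) (hKX y)
    have t2 : ‖iteratedFDeriv ℝ 2 v y‖ * ‖iteratedFDeriv ℝ (2-2) (chin d n) y‖ ≤
        (K * (1 + ‖y‖^q)) * M :=
      mul_le_mul (hvB 2 (by norm_num) y) (hM n y 0 (by norm_num)) (norm_nonneg _) (hKX y)
    have hKM : (0:ℝ) ≤ (K * (1 + ‖y‖^q)) * M := mul_nonneg (hKX y) hM0
    refine hle.trans ?_
    have hch : ((2:ℕ).choose 1 : ℝ) = 2 := by norm_num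
    simp only [Nat.choose_self, Nat.choose_zero_right, Nat.cast_one, one_mul, zero_add, hch]
    have : Bv y = 4 * ((K * (1 + ‖y‖^q)) * M) := by rw [hBvdef]; ring
    rw [this]
    nlinarith [t0, t1, t2]
  set bound : (Fin d → ℝ) → ℝ :=
    fun y => (d : ℝ) * (Cf * (1 + ‖y‖) * Bv y) + (d : ℝ)^2 * (Ca * Bv y) with hbddef
  have hone : Integrable (fun _ : Fin d → ℝ => (1:ℝ)) π := by simpa using hmom 0
  have hbound_int : Integrable bound π := by
    have hint1 : Integrable (fun y : Fin d → ℝ => (1 + ‖y‖) * (1 + ‖y‖^q)) π := by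
      have hfe : (fun y : Fin d → ℝ => (1 + ‖y‖) * (1 + ‖y‖^q)) =
          fun y => ((fun _ => (1:ℝ)) y + ‖y‖^1) + (‖y‖^q + ‖y‖^(q+1)) := by
        funext y; simp only; ring
      rw [hfe]
      exact (hone.add (hmom 1)).add ((hmom q).add (hmom (q+1)))
    have hfe2 : bound = fun y =>
        ((d : ℝ) * Cf * (4 * (K * M))) * ((1 + ‖y‖) * (1 + ‖y‖^q)) +
        ((d : ℝ)^2 * Ca * (4 * (K * M))) * ((fun _ => (1:ℝ)) y + ‖y‖^q) := by
      funext y; rw [hbddef, hBvdef]; simp only; ring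
    rw [hfe2]
    exact (hint1.const_mul _).add ((hone.add (hmom q)).const_mul _)
  have hFmeas : ∀ n : ℕ, AEStronglyMeasurable (genL f a (w n)) π :=
    fun n => (continuous_genL hfc hac (hwcd n)).aestronglyMeasurable
  have h_bound : ∀ n : ℕ, ∀ᵐ y ∂π, ‖genL f a (w n) y‖ ≤ bound y := by
    intro n
    filter_upwards with y
    rw [Real.norm_eq_abs]
    exact abs_genL_le (hwcd n) hCf hCa hfg hag (h1w n) (h2w n) y
  have h_lim : ∀ᵐ y ∂π, Filter.Tendsto (fun n => genL f a (w n) y)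
      Filter.atTop (nhds (genL f a v y)) := by
    filter_upwards with y
    have hev : ∀ᶠ n in Filter.atTop, genL f a (w n) y = genL f a v y := by
      filter_upwards [Filter.eventually_ge_atTop ⌈sqn y⌉₊] with n hn
      have hlt : sqn y < ((n:ℝ) + 1)^2 := by
        have h1 : sqn y ≤ (n : ℝ) := le_trans (Nat.le_ceil _) (by exact_mod_cast hn)
        nlinarith [Nat.cast_nonneg (α := ℝ) n]
      set U := {z : Fin d → ℝ | sqn z < ((n:ℝ) + 1)^2} with hUdef
      have hUo : IsOpen U := isOpen_lt contDiff_sqn.continuous continuous_const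
      have hyU : y ∈ U := hlt
      have hUnhds : U ∈ nhds y := hUo.mem_nhds hyU
      have heq : ∀ z ∈ U, w n z = v z := by
        intro z hz
        have hz' : sqn z < ((n:ℝ) + 1)^2 := hz
        have hcz : chin d n z = 1 := by
          unfold chin
          rw [Function.comp_apply, scl_apply]
          apply chi_one
          rw [sqn_smul]
          have hpos : (0:ℝ) < ((n:ℝ) + 1)^2 := by positivity
          have h2 : (((n:ℝ) + 1)⁻¹)^2 * sqn z = sqn z / ((n:ℝ) + 1)^2 := by
            field_simp
          rw [h2]
          exact (div_le_one hpos).mpr hz'.le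
        show v z * chin d n z = v z
        rw [hcz, mul_one]
      have hfd : ∀ z ∈ U, fderiv ℝ (w n) z = fderiv ℝ v z := fun z hz =>
        Filter.EventuallyEq.fderiv_eq (Filter.eventuallyEq_of_mem (hUo.mem_nhds hz) heq)
      have hp1 : ∀ i, pd1 (w n) y i = pd1 v y i := fun i => by
        unfold pd1; rw [hfd y hyU]
      have hp2 : ∀ i j, pd2 (w n) y i j = pd2 v y i j := by
        intro i j
        unfold pd2
        have hee : (fun z => fderiv ℝ (w n) z (Pi.single j 1)) =ᶠ[nhds y]
            (fun z => fderiv ℝ v z (Pi.single j 1)) :=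
          Filter.eventuallyEq_of_mem hUnhds (fun z hz => by rw [hfd z hz])
        rw [hee.fderiv_eq]
      unfold genL
      rw [Finset.sum_congr rfl (fun i _ => by rw [hp1 i]),
        Finset.sum_congr rfl (fun i _ => Finset.sum_congr rfl fun j _ => by rw [hp2 i j])]
    exact tendsto_const_nhds.congr' (hev.mono fun n h => h.symm)
  have hwcs : ∀ n, HasCompactSupport (w n) := by
    intro n
    refine HasCompactSupport.intro (isCompact_closedBall (0 : Fin d → ℝ) (2 * ((n:ℝ) + 1)))
      fun z hz => ?_
    rw [Metric.mem_closedBall, dist_zero_right, not_le] at hz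
    have hcz : chin d n z = 0 := by
      unfold chin
      rw [Function.comp_apply, scl_apply]
      apply chi_zero'
      rw [norm_smul, Real.norm_eq_abs,
        abs_of_pos (by positivity : (0:ℝ) < ((n:ℝ) + 1)⁻¹), inv_mul_eq_div]
      exact (lt_div_iff₀ (by positivity)).mpr (by linarith)
    show v z * chin d n z = 0
    rw [hcz, mul_zero]
  have hwCb : ∀ n, CbTwo (w n) := by
    intro n
    refine ⟨hwcd n, ?_⟩
    obtain ⟨K0, hK0⟩ := (hwcs n).exists_bound_of_continuous (hwcd n).continuous
    obtain ⟨K1, hK1⟩ := ((hwcs n).iteratedFDeriv 1).exists_bound_of_continuous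
      ((hwcd n).continuous_iteratedFDeriv (by norm_num))
    obtain ⟨K2, hK2⟩ := ((hwcs n).iteratedFDeriv 2).exists_bound_of_continuous
      ((hwcd n).continuous_iteratedFDeriv (by norm_num))
    refine ⟨max K0 (max K1 K2), fun y => ⟨?_, ?_, ?_⟩⟩
    · exact le_trans (by rw [← Real.norm_eq_abs]; exact hK0 y) (le_max_left _ _)
    · exact (hK1 y).trans ((le_max_left _ _).trans (le_max_right _ _))
    · exact (hK2 y).trans ((le_max_right _ _).trans (le_max_right _ _))
  have hzero_n : ∀ n : ℕ, ∫ y, genL f a (w n) y ∂π = 0 := fun n => hinv.2 (w n) (hwCb n)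
  have hDCT := MeasureTheory.tendsto_integral_of_dominated_convergence bound hFmeas
    hbound_int h_bound h_lim
  have hz : ∫ y, genL f a v y ∂π = 0 := by
    have h0 : Filter.Tendsto (fun _ : ℕ => (0:ℝ)) Filter.atTop
        (nhds (∫ y, genL f a v y ∂π)) := hDCT.congr hzero_n
    exact (tendsto_nhds_unique h0 tendsto_const_nhds)
  have hvBv : ∀ (k : ℕ), k ≤ 2 → ∀ y, ‖iteratedFDeriv ℝ k v y‖ ≤ Bv y := by
    intro k hk y
    refine (hvB k hk y).trans ?_
    have hX : (0:ℝ) ≤ 1 + ‖y‖^q := by positivity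
    have : Bv y = 4 * (K * M) * (1 + ‖y‖^q) := rfl
    nlinarith [mul_nonneg (mul_nonneg hK hX) (by linarith : (0:ℝ) ≤ 4 * M - 1)]
  have hint : Integrable (genL f a v) π := by
    refine hbound_int.mono' (continuous_genL hfc hac hv).aestronglyMeasurable ?_
    filter_upwards with y
    rw [Real.norm_eq_abs]
    exact abs_genL_le hv hCf hCa hfg hag (hvBv 1 (by norm_num)) (hvBv 2 (by norm_num)) y
  exact ⟨hint, hz⟩

lemma transfer_key {d : ℕ}
    {f₁ f₂ : (Fin d → ℝ) → Fin d → ℝ} {a₁ a₂ : (Fin d → ℝ) → Fin d → Fin d → ℝ}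
    {π₁ : Measure (Fin d → ℝ)} [IsProbabilityMeasure π₁]
    {v h₁ h₂ : (Fin d → ℝ) → ℝ} {c : ℝ}
    (hi₁ : Integrable h₁ π₁)
    (hL : Integrable (genL f₁ a₁ v) π₁)
    (hz : ∫ y, genL f₁ a₁ v y ∂π₁ = 0)
    (hp : ∀ y, genL f₂ a₂ v y = h₂ y - c) :
    (∫ y, h₁ y ∂π₁) - c =
      ∫ y, (h₁ y - h₂ y - (genL f₁ a₁ v y - genL f₂ a₂ v y)) ∂π₁ := by
  have he : (fun y => h₁ y - h₂ y - (genL f₁ a₁ v y - genL f₂ a₂ v y)) =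
      fun y => (h₁ y - c) - genL f₁ a₁ v y := by
    funext y; rw [hp y]; ring
  rw [he]
  have hic : Integrable (fun y => h₁ y - c) π₁ := hi₁.sub (integrable_const c)
  have e1 : ∫ y, ((h₁ y - c) - genL f₁ a₁ v y) ∂π₁ =
      (∫ y, (h₁ y - c) ∂π₁) - ∫ y, genL f₁ a₁ v y ∂π₁ := integral_sub hic hL
  have e2 : ∫ y, (h₁ y - c) ∂π₁ = (∫ y, h₁ y ∂π₁) - c := by
    rw [integral_sub hi₁ (integrable_const c), integral_const]
    simp
  rw [e1, e2, hz, sub_zero]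

end LemmaA

/-- difference transfer formulas for averages against the invariant
measures, in the measure argument and in the frozen spatial argument. -/
theorem transfer_formula_differences
    (d : ℕ) (hd : 0 < d)
    (f : (Fin d → ℝ) → (Fin d → ℝ) → ProbMeas2 d → Fin d → ℝ)
    (a : (Fin d → ℝ) → (Fin d → ℝ) → ProbMeas2 d → Fin d → Fin d → ℝ)
    (π : (Fin d → ℝ) → ProbMeas2 d → Measure (Fin d → ℝ))
    (hA1 : AssumptionA1 (fun p : (Fin d → ℝ) × ProbMeas2 d => fun y => a p.1 y p.2))
    (hA2 : AssumptionA2 (fun p : (Fin d → ℝ) × ProbMeas2 d => fun y => f p.1 y p.2))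
    (hπ : ∀ x μ, IsInvariantMeasure (fun y => f x y μ) (fun y => a x y μ) (π x μ))
    (hπmom : ∀ x μ (q : ℕ), Integrable (fun y => ‖y‖ ^ q) (π x μ))
    (h : (Fin d → ℝ) → (Fin d → ℝ) → ProbMeas2 d → ℝ)
    (hcont : ∀ μ, Continuous fun p : (Fin d → ℝ) × (Fin d → ℝ) => h p.1 p.2 μ)
    (hpoly : ∃ K : ℝ, ∃ q : ℕ, ∀ x y μ, |h x y μ| ≤ K * (1 + ‖y‖ ^ q)) :
    (∀ (x : Fin d → ℝ) (μ₂ : ProbMeas2 d) (v : (Fin d → ℝ) → ℝ),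
      ContDiff ℝ 2 v →
      (∃ K : ℝ, ∃ q : ℕ, ∀ y, |v y| ≤ K * (1 + ‖y‖ ^ q) ∧
          ‖iteratedFDeriv ℝ 1 v y‖ ≤ K * (1 + ‖y‖ ^ q) ∧
          ‖iteratedFDeriv ℝ 2 v y‖ ≤ K * (1 + ‖y‖ ^ q)) →
      (∀ y, genL (fun z => f x z μ₂) (fun z => a x z μ₂) v y =
          h x y μ₂ - ∫ z, h x z μ₂ ∂(π x μ₂)) →
      ∀ μ₁ : ProbMeas2 d,
        (∫ y, h x y μ₁ ∂(π x μ₁)) - (∫ y, h x y μ₂ ∂(π x μ₂)) =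
          ∫ y, (h x y μ₁ - h x y μ₂ -
            (genL (fun z => f x z μ₁) (fun z => a x z μ₁) v y -
              genL (fun z => f x z μ₂) (fun z => a x z μ₂) v y)) ∂(π x μ₁)) ∧
    (∀ (x₂ : Fin d → ℝ) (μ : ProbMeas2 d) (v : (Fin d → ℝ) → ℝ),
      ContDiff ℝ 2 v →
      (∃ K : ℝ, ∃ q : ℕ, ∀ y, |v y| ≤ K * (1 + ‖y‖ ^ q) ∧
          ‖iteratedFDeriv ℝ 1 v y‖ ≤ K * (1 + ‖y‖ ^ q) ∧
          ‖iteratedFDeriv ℝ 2 v y‖ ≤ K * (1 + ‖y‖ ^ q)) →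
      (∀ y, genL (fun z => f x₂ z μ) (fun z => a x₂ z μ) v y =
          h x₂ y μ - ∫ z, h x₂ z μ ∂(π x₂ μ)) →
      ∀ x₁ : Fin d → ℝ,
        (∫ y, h x₁ y μ ∂(π x₁ μ)) - (∫ y, h x₂ y μ ∂(π x₂ μ)) =
          ∫ y, (h x₁ y μ - h x₂ y μ -
            (genL (fun z => f x₁ z μ) (fun z => a x₁ z μ) v y -
              genL (fun z => f x₂ z μ) (fun z => a x₂ z μ) v y)) ∂(π x₁ μ)) := by
  obtain ⟨Kh, qh, hh⟩ := hpoly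
  obtain ⟨-, ⟨Cf0, hCf0⟩, hfcd, -, -⟩ := hA2
  obtain ⟨-, -, ⟨Ka0, hKa0⟩, hacd, -, -⟩ := hA1
  have habs : ∀ (x : Fin d → ℝ) (μ : ProbMeas2 d) y i,
      |f x y μ i| ≤ max Cf0 0 * (1 + ‖y‖) := by
    intro x μ y i
    have h1 : |f x y μ i| ≤ ‖f x y μ‖ := by
      rw [← Real.norm_eq_abs]; exact norm_le_pi_norm (f x y μ) i
    refine h1.trans ((hCf0 (x, μ) y).trans ?_)
    exact mul_le_mul_of_nonneg_right (le_max_left _ _) (by positivity)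
  have haabs : ∀ (x : Fin d → ℝ) (μ : ProbMeas2 d) y i j,
      |a x y μ i j| ≤ max Ka0 0 := fun x μ y i j =>
    (hKa0 (x, μ) y i j).trans (le_max_left _ _)
  have hhint : ∀ (x : Fin d → ℝ) (μ : ProbMeas2 d),
      Integrable (fun y => h x y μ) (π x μ) := by
    intro x μ
    refine integrable_poly (hπmom x μ) ?_ (fun y => hh x y μ)
    exact (hcont μ).comp (Continuous.prodMk_right x)
  constructor
  · intro x μ₂ v hvcd hvgr hpois μ₁
    obtain ⟨K, q, hvg⟩ := hvgr
    haveI : IsProbabilityMeasure (π x μ₁) := (hπ x μ₁).1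
    have hvg' : ∀ y, |v y| ≤ max K 0 * (1 + ‖y‖^q) ∧
        ‖iteratedFDeriv ℝ 1 v y‖ ≤ max K 0 * (1 + ‖y‖^q) ∧
        ‖iteratedFDeriv ℝ 2 v y‖ ≤ max K 0 * (1 + ‖y‖^q) := by
      intro y
      have hm : K * (1 + ‖y‖^q) ≤ max K 0 * (1 + ‖y‖^q) :=
        mul_le_mul_of_nonneg_right (le_max_left _ _) (by positivity)
      exact ⟨(hvg y).1.trans hm, (hvg y).2.1.trans hm, (hvg y).2.2.trans hm⟩
    obtain ⟨hL, hz⟩ := integral_genL_eq_zero hd (hπ x μ₁) (hπmom x μ₁)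
      (fun i => (hfcd (x, μ₁) i).continuous) (le_max_right Cf0 0) (habs x μ₁)
      (fun i j => (hacd (x, μ₁) i j).continuous) (le_max_right Ka0 0) (haabs x μ₁)
      hvcd (le_max_right K 0) hvg'
    exact transfer_key (hhint x μ₁) hL hz hpois
  · intro x₂ μ v hvcd hvgr hpois x₁
    obtain ⟨K, q, hvg⟩ := hvgr
    haveI : IsProbabilityMeasure (π x₁ μ) := (hπ x₁ μ).1
    have hvg' : ∀ y, |v y| ≤ max K 0 * (1 + ‖y‖^q) ∧
        ‖iteratedFDeriv ℝ 1 v y‖ ≤ max K 0 * (1 + ‖y‖^q) ∧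
        ‖iteratedFDeriv ℝ 2 v y‖ ≤ max K 0 * (1 + ‖y‖^q) := by
      intro y
      have hm : K * (1 + ‖y‖^q) ≤ max K 0 * (1 + ‖y‖^q) :=
        mul_le_mul_of_nonneg_right (le_max_left _ _) (by positivity)
      exact ⟨(hvg y).1.trans hm, (hvg y).2.1.trans hm, (hvg y).2.2.trans hm⟩
    obtain ⟨hL, hz⟩ := integral_genL_eq_zero hd (hπ x₁ μ) (hπmom x₁ μ)
      (fun i => (hfcd (x₁, μ) i).continuous) (le_max_right Cf0 0) (habs x₁ μ)
      (fun i j => (hacd (x₁, μ) i j).continuous) (le_max_right Ka0 0) (haabs x₁ μ)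
      hvcd (le_max_right K 0) hvg'
    exact transfer_key (hhint x₁ μ) hL hz hpois

end
end

section
/- In the one-dimensional explicit invariant density setup, the function ρ is Lebesgue-integrable on ℝ, so Z ∈ (0,∞) and π is a probability density; and π is an invariant density for the generator Lφ = fφ' + aφ'': for every twice continuously differentiable φ : ℝ → ℝ with compact support, ∫_ℝ ( f(y)φ'(y) + a(y)φ''(y) ) π(y) dy = 0. -/
open MeasureTheory

noncomputable section

/-- The explicit (unnormalized) one-dimensional invariant density
`ρ(y) = a(y)⁻¹ exp(∫₀^y f(s)/a(s) ds)`. -/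
def rho1 (a f : ℝ → ℝ) (y : ℝ) : ℝ :=
  (a y)⁻¹ * Real.exp (∫ s in (0:ℝ)..y, f s / a s)

/-- The normalizing constant `Z = ∫_ℝ ρ(y) dy`. -/
def Z1 (a f : ℝ → ℝ) : ℝ := ∫ y, rho1 a f y

/-- The normalized invariant density `π = ρ / Z`. -/
def piDen (a f : ℝ → ℝ) (y : ℝ) : ℝ := rho1 a f y / Z1 a f

/-- The average `h̄ = ∫_ℝ h(y) π(y) dy`. -/
def hbar (a f h : ℝ → ℝ) : ℝ := ∫ y, h y * piDen a f y

/-- `F(y) = ∫_{−∞}^y (h(s) − h̄) π(s) ds`. -/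
def Fint (a f h : ℝ → ℝ) (y : ℝ) : ℝ :=
  ∫ s in Set.Iic y, (h s - hbar a f h) * piDen a f s

/-- The explicit solution `v(y) = ∫₀^y F(s)/(a(s)π(s)) ds` of the one-dimensional
Poisson equation `a v'' + f v' = h − h̄`. -/
def vsol (a f h : ℝ → ℝ) (y : ℝ) : ℝ :=
  ∫ s in (0:ℝ)..y, Fint a f h s / (a s * piDen a f s)

/-- the explicit one-dimensional density `π = ρ/Z` is a probability
density and is invariant for the generator `Lφ = fφ' + aφ''`. -/
theorem one_dim_invariant_density
    (a f : ℝ → ℝ) (lm lp β C : ℝ)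
    (hac : Continuous a) (hfc : Continuous f)
    (hlm : 0 < lm) (hbnd : ∀ y, lm ≤ a y ∧ a y ≤ lp)
    (hβ : 0 < β) (hC : 0 < C) (hdis : ∀ y, f y * y ≤ -β * y ^ 2 + C) :
    Integrable (rho1 a f) ∧ 0 < Z1 a f ∧ (∫ y, piDen a f y) = 1 ∧
      ∀ φ : ℝ → ℝ, ContDiff ℝ 2 φ → HasCompactSupport φ →
        (∫ y, (f y * deriv φ y + a y * deriv (deriv φ) y) * piDen a f y) = 0 := by
  have ha_pos : ∀ y, 0 < a y := fun y => lt_of_lt_of_le hlm (hbnd y).1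
  have ha_ne : ∀ y, a y ≠ 0 := fun y => (ha_pos y).ne'
  have hlp : 0 < lp := lt_of_lt_of_le hlm (le_trans (hbnd 0).1 (hbnd 0).2)
  set q : ℝ → ℝ := fun s => f s / a s with hq_def
  have hqc : Continuous q := hfc.div hac ha_ne
  set G : ℝ → ℝ := fun y => ∫ s in (0:ℝ)..y, f s / a s with hG_def
  have hGd : ∀ y, HasDerivAt G (q y) y := by
    intro y
    exact intervalIntegral.integral_hasDerivAt_right (hqc.intervalIntegrable 0 y)
      hqc.stronglyMeasurable.stronglyMeasurableAtFilter hqc.continuousAt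
  have hGdiff : Differentiable ℝ G := fun y => (hGd y).differentiableAt
  have hGc : Continuous G := hGdiff.continuous
  have hrho_eq : ∀ y, rho1 a f y = (a y)⁻¹ * Real.exp (G y) := fun y => rfl
  have hrho_pos : ∀ y, 0 < rho1 a f y := fun y =>
    mul_pos (inv_pos.mpr (ha_pos y)) (Real.exp_pos _)
  have hrhoc : Continuous (rho1 a f) := (hac.inv₀ ha_ne).mul (Real.continuous_exp.comp hGc)
  -- the Gaussian bound
  set c : ℝ := β / (4 * lp) with hc_def
  have hc : 0 < c := div_pos hβ (by positivity)
  set R : ℝ := Real.sqrt (2 * C / β) with hR_def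
  have hR0 : 0 ≤ R := Real.sqrt_nonneg _
  have hR2 : R ^ 2 = 2 * C / β := Real.sq_sqrt (by positivity)
  -- bound on q for s ≥ R
  have hq_up : ∀ s, R ≤ s → q s ≤ -(2 * c) * s := by
    intro s hs
    have hs0 : 0 < s := lt_of_lt_of_le (Real.sqrt_pos.mpr (by positivity)) hs
    have hs2 : 2 * C / β ≤ s ^ 2 := by
      rw [← hR2]; exact pow_le_pow_left₀ hR0 hs 2
    have hfs : f s * s ≤ -β * s ^ 2 + C := hdis s
    have hβs : 2 * C ≤ β * s ^ 2 := by
      rw [div_le_iff₀ hβ] at hs2; linarith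
    have h1 : f s ≤ -(β / 2) * s := by
      have h2 : f s * s ≤ (-(β / 2) * s) * s := by nlinarith
      exact le_of_mul_le_mul_right (by linarith [h2]) hs0
    rw [hq_def]
    rw [div_le_iff₀ (ha_pos s)]
    have hcs : -(2 * c) * s ≤ 0 := by nlinarith
    have h3 : -(2 * c) * s * lp ≤ -(2 * c) * s * a s := by
      nlinarith [(hbnd s).2]
    have h4 : -(β / 2) * s = -(2 * c) * s * lp := by
      rw [hc_def]; field_simp; ring
    linarith
  have hq_lo : ∀ s, s ≤ -R → -(2 * c) * s ≤ q s := by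
    intro s hs
    have hs0 : s < 0 := lt_of_le_of_lt hs (by nlinarith [Real.sqrt_pos.mpr (show (0:ℝ) < 2 * C / β by positivity)])
    have hs2 : 2 * C / β ≤ s ^ 2 := by
      rw [← hR2]
      have : R ≤ -s := by linarith
      calc R ^ 2 ≤ (-s) ^ 2 := pow_le_pow_left₀ hR0 this 2
        _ = s ^ 2 := by ring
    have hfs : f s * s ≤ -β * s ^ 2 + C := hdis s
    have hβs : 2 * C ≤ β * s ^ 2 := by
      rw [div_le_iff₀ hβ] at hs2; linarith
    have h1 : -(β / 2) * s ≤ f s := by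
      have h2 : f s * s ≤ (-(β / 2) * s) * s := by nlinarith
      nlinarith
    rw [hq_def, le_div_iff₀ (ha_pos s)]
    have hcs : 0 ≤ -(2 * c) * s := by nlinarith
    have h3 : -(2 * c) * s * a s ≤ -(2 * c) * s * lp := by
      nlinarith [(hbnd s).2]
    have h4 : -(β / 2) * s = -(2 * c) * s * lp := by
      rw [hc_def]; field_simp; ring
    linarith
  -- integral of the linear bound
  have hlin : ∀ u v : ℝ, (∫ s in u..v, -(2 * c) * s) = c * u ^ 2 - c * v ^ 2 := by
    intro u v
    rw [intervalIntegral.integral_const_mul, integral_id]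
    ring
  -- global bound G y + c y² ≤ K
  obtain ⟨K₀, hK₀⟩ : ∃ K₀, ∀ y ∈ Set.Icc (-R) R, G y + c * y ^ 2 ≤ K₀ := by
    obtain ⟨x, -, hx⟩ := (isCompact_Icc : IsCompact (Set.Icc (-R) R)).exists_isMaxOn (Set.nonempty_Icc.mpr (by linarith))
      (hGc.add (continuous_const.mul (continuous_pow 2))).continuousOn
    exact ⟨G x + c * x ^ 2, fun y hy => hx hy⟩
  set K : ℝ := max K₀ (max (G R + c * R ^ 2) (G (-R) + c * R ^ 2)) with hK_def
  have hKbound : ∀ y, G y + c * y ^ 2 ≤ K := by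
    intro y
    rcases le_total y R with hyR | hyR
    · rcases le_total (-R) y with hy | hy
      · exact le_trans (hK₀ y ⟨hy, hyR⟩) (le_max_left _ _)
      · -- y ≤ -R
        have hadd : G y + ∫ s in y..(-R), q s = G (-R) :=
          intervalIntegral.integral_add_adjacent_intervals
            (hqc.intervalIntegrable 0 y) (hqc.intervalIntegrable y (-R))
        have hmono : (∫ s in y..(-R), -(2 * c) * s) ≤ ∫ s in y..(-R), q s := by
          apply intervalIntegral.integral_mono_on hy
            ((continuous_const.mul continuous_id).intervalIntegrable _ _)
            (hqc.intervalIntegrable _ _)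
          intro s hs
          exact hq_lo s hs.2
        rw [hlin y (-R)] at hmono
        have : G y ≤ G (-R) + c * R ^ 2 - c * y ^ 2 := by
          have : (-R) ^ 2 = R ^ 2 := by ring
          nlinarith [hmono, hadd]
        calc G y + c * y ^ 2 ≤ G (-R) + c * R ^ 2 := by linarith
          _ ≤ K := le_trans (le_max_right _ _) (le_max_right _ _)
    · -- R ≤ y
      have hadd : G R + ∫ s in R..y, q s = G y :=
        intervalIntegral.integral_add_adjacent_intervals
          (hqc.intervalIntegrable 0 R) (hqc.intervalIntegrable R y)
      have hmono : (∫ s in R..y, q s) ≤ ∫ s in R..y, -(2 * c) * s := by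
        apply intervalIntegral.integral_mono_on hyR (hqc.intervalIntegrable _ _)
          ((continuous_const.mul continuous_id).intervalIntegrable _ _)
        intro s hs
        exact hq_up s hs.1
      rw [hlin R y] at hmono
      calc G y + c * y ^ 2 ≤ G R + c * R ^ 2 := by linarith
        _ ≤ K := le_trans (le_max_left _ _) (le_max_right _ _)
  -- integrability of rho1
  have hIrho : Integrable (rho1 a f) := by
    have hgauss : Integrable (fun y => (lm⁻¹ * Real.exp K) * Real.exp (-c * y ^ 2)) :=
      (integrable_exp_neg_mul_sq hc).const_mul _
    refine hgauss.mono' hrhoc.aestronglyMeasurable (Filter.Eventually.of_forall fun y => ?_)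
    rw [Real.norm_eq_abs, abs_of_pos (hrho_pos y), hrho_eq y]
    have h1 : (a y)⁻¹ ≤ lm⁻¹ := inv_anti₀ hlm (hbnd y).1
    have h2 : Real.exp (G y) ≤ Real.exp K * Real.exp (-c * y ^ 2) := by
      rw [← Real.exp_add]
      apply Real.exp_le_exp.mpr
      have := hKbound y; linarith
    calc (a y)⁻¹ * Real.exp (G y) ≤ lm⁻¹ * (Real.exp K * Real.exp (-c * y ^ 2)) :=
        mul_le_mul h1 h2 (le_of_lt (Real.exp_pos _)) (by positivity)
      _ = (lm⁻¹ * Real.exp K) * Real.exp (-c * y ^ 2) := by ring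
  have hZpos : 0 < Z1 a f := by
    rw [Z1]
    rw [integral_pos_iff_support_of_nonneg (fun y => (hrho_pos y).le) hIrho]
    have : Function.support (rho1 a f) = Set.univ :=
      Set.eq_univ_of_forall fun y => (hrho_pos y).ne'
    rw [this]
    simp
  refine ⟨hIrho, hZpos, ?_, ?_⟩
  · unfold piDen
    rw [integral_div]
    exact div_self hZpos.ne'
  · intro φ hφ hφs
    -- w = exp(G) * φ'
    have hφ1 : ContDiff ℝ 1 φ := hφ.of_le (by norm_num)
    have hdφ1 : ContDiff ℝ 1 (deriv φ) := by
      have h2 : ContDiff ℝ ((1:ℕ∞) + 1) φ := hφ.of_le (by norm_num)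
      exact_mod_cast (contDiff_succ_iff_deriv.mp h2).2.2
    set w : ℝ → ℝ := fun y => Real.exp (G y) * deriv φ y with hw_def
    have hG1 : ContDiff ℝ 1 G := by
      rw [contDiff_one_iff_deriv]
      refine ⟨hGdiff, ?_⟩
      have : deriv G = q := funext fun y => (hGd y).deriv
      rw [this]; exact hqc
    have hw1 : ContDiff ℝ 1 w := (Real.contDiff_exp.comp hG1).mul hdφ1
    have hws : HasCompactSupport w := hφs.deriv.mul_left
    have hwd : ∀ y, HasDerivAt w
        (q y * Real.exp (G y) * deriv φ y + Real.exp (G y) * deriv (deriv φ) y) y := by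
      intro y
      have h1 : HasDerivAt (fun y => Real.exp (G y)) (Real.exp (G y) * q y) y :=
        (hGd y).exp
      have h2 : HasDerivAt (deriv φ) (deriv (deriv φ) y) y :=
        ((hdφ1.differentiable one_ne_zero) y).hasDerivAt
      have := h1.mul h2
      refine this.congr_deriv ?_
      ring
    have hderiv_w : ∀ y, deriv w y =
        q y * Real.exp (G y) * deriv φ y + Real.exp (G y) * deriv (deriv φ) y :=
      fun y => (hwd y).deriv
    -- pointwise identity
    have hpt : ∀ y, (f y * deriv φ y + a y * deriv (deriv φ) y) * piDen a f y
        = deriv w y / Z1 a f := by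
      intro y
      rw [hderiv_w y, piDen, hrho_eq y, hq_def]
      field_simp [ha_ne y, hZpos.ne']
    calc (∫ y, (f y * deriv φ y + a y * deriv (deriv φ) y) * piDen a f y)
        = ∫ y, deriv w y / Z1 a f := by
          exact integral_congr_ae (Filter.Eventually.of_forall hpt)
      _ = (∫ y, deriv w y) / Z1 a f := integral_div _ _
      _ = 0 := by
          have hwint : Integrable (deriv w) :=
            ((hw1.continuous_deriv le_rfl).integrable_of_hasCompactSupport hws.deriv)
          have : (∫ y, deriv w y) =
              (∫ y in Set.Iic 0, deriv w y) + ∫ y in Set.Ioi 0, deriv w y :=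
            (intervalIntegral.integral_Iic_add_Ioi hwint.integrableOn hwint.integrableOn).symm
          rw [this, hws.integral_Iic_deriv_eq hw1 0, hws.integral_Ioi_deriv_eq hw1 0]
          simp [div_eq_mul_inv]

end
end

section
/- In the one-dimensional explicit invariant density setup, the operator Lw = a w'' + f w' has a Liouville property in the class of polynomially growing functions: if w : ℝ → ℝ is twice continuously differentiable, satisfies a(y)w''(y) + f(y)w'(y) = 0 for every y ∈ ℝ, and there are K, m with |w(y)| ≤ K(1+|y|^m) for all y, then w is constant. Consequently, for continuous h of at most polynomial growth with h̄ = ∫ h π dy, any two twice continuously differentiable solutions of a v'' + f v' = h − h̄ of at most polynomial growth differ by a constant, and there is at most one such solution satisfying ∫_ℝ v(y)π(y) dy = 0. -/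
open MeasureTheory

noncomputable section

open Filter
lemma gaussInt {ε : ℝ} (hε : 0 < ε) (m : ℕ) :
    Integrable (fun y : ℝ => (1 + |y| ^ m) * Real.exp (-ε * y ^ 2)) := by
  have h1 : Integrable (fun y : ℝ => Real.exp (-ε * y ^ 2)) := integrable_exp_neg_mul_sq hε
  have h2 : Integrable (fun y : ℝ => y ^ (m : ℝ) * Real.exp (-ε * y ^ 2)) :=
    integrable_rpow_mul_exp_neg_mul_sq hε
      (lt_of_lt_of_le neg_one_lt_zero (Nat.cast_nonneg m))
  have h2' : Integrable (fun y : ℝ => |y| ^ m * Real.exp (-ε * y ^ 2)) := by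
    refine h2.abs.congr (Eventually.of_forall fun y => ?_)
    simp only [abs_mul, abs_of_nonneg (Real.exp_pos _).le, Real.rpow_natCast, abs_pow]
  have := h1.add h2'
  refine this.congr (Eventually.of_forall fun y => ?_)
  simp only [Pi.add_apply]
  ring


lemma poly_mono {y : ℝ} {k m : ℕ} (h : k ≤ m) : 1 + |y| ^ k ≤ 2 * (1 + |y| ^ m) := by
  rcases le_total (|y|) 1 with hy | hy
  · have h1 : |y| ^ k ≤ 1 := pow_le_one₀ (abs_nonneg y) hy
    nlinarith [pow_nonneg (abs_nonneg y) m]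
  · have h1 : |y| ^ k ≤ |y| ^ m := pow_le_pow_right₀ hy h
    nlinarith [pow_nonneg (abs_nonneg y) k]

lemma G_bound (a f : ℝ → ℝ) (lm lp β C : ℝ)
    (hac : Continuous a) (hfc : Continuous f)
    (hlm : 0 < lm) (hbnd : ∀ y, lm ≤ a y ∧ a y ≤ lp)
    (hβ : 0 < β) (hC : 0 < C) (hdis : ∀ y, f y * y ≤ -β * y ^ 2 + C) :
    ∃ B : ℝ, ∀ y, (∫ s in (0:ℝ)..y, f s / a s) ≤ B - (β / (4 * lp)) * y ^ 2 := by
  have hlp : 0 < lp := lt_of_lt_of_le hlm (le_trans (hbnd 0).1 (hbnd 0).2)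
  have hap : ∀ s, 0 < a s := fun s => lt_of_lt_of_le hlm (hbnd s).1
  set g : ℝ → ℝ := fun s => f s / a s with hg
  have hgc : Continuous g := hfc.div hac fun s => (hap s).ne'
  have hgint : ∀ x y : ℝ, IntervalIntegrable g volume x y :=
    fun x y => hgc.intervalIntegrable x y
  set G : ℝ → ℝ := fun y => ∫ s in (0:ℝ)..y, g s with hGdef
  have hGd : ∀ y, HasDerivAt G (g y) y := fun y =>
    intervalIntegral.integral_hasDerivAt_right (hgint 0 y)
      hgc.stronglyMeasurable.stronglyMeasurableAtFilter hgc.continuousAt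
  have hGc : Continuous G :=
    continuous_iff_continuousAt.mpr fun y => (hGd y).continuousAt
  set T : ℝ := max 1 (Real.sqrt (2 * C / β)) with hTdef
  have hT1 : (1:ℝ) ≤ T := le_max_left _ _
  have hT0 : 0 < T := lt_of_lt_of_le one_pos hT1
  have hT2 : 2 * C ≤ β * T ^ 2 := by
    have h0 : (0:ℝ) ≤ 2 * C / β := by positivity
    have hs := Real.sq_sqrt h0
    have h' : Real.sqrt (2 * C / β) ^ 2 ≤ T ^ 2 :=
      pow_le_pow_left₀ (Real.sqrt_nonneg _) (le_max_right _ _) 2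
    rw [hs] at h'
    rw [div_le_iff₀ hβ] at h'
    linarith
  -- pointwise bounds outside [-T, T]
  have claim_pos : ∀ s, T ≤ s → g s ≤ -(β / (2 * lp)) * s := by
    intro s hs
    have hs0 : 0 < s := lt_of_lt_of_le hT0 hs
    have hsT : T ^ 2 ≤ s ^ 2 := pow_le_pow_left₀ hT0.le hs 2
    have hfs : f s ≤ -(β / 2) * s := by
      have h1 := hdis s
      refine le_of_mul_le_mul_right ?_ hs0
      nlinarith
    have has := hbnd s
    rw [hg]
    have : -(β / (2 * lp)) * s = (-(β * s * lp)) / (2 * lp * lp) := by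
      field_simp
      try tauto
    rw [this, div_le_div_iff₀ (hap s) (by positivity)]
    nlinarith [mul_le_mul_of_nonneg_left has.2 (show (0:ℝ) ≤ β * s * lp by positivity),
      mul_le_mul_of_nonneg_right hfs (show (0:ℝ) ≤ 2 * lp * lp by positivity)]
  have claim_neg : ∀ s, s ≤ -T → -(β / (2 * lp)) * s ≤ g s := by
    intro s hs
    have hs0 : s < 0 := lt_of_le_of_lt hs (by linarith)
    have hsT : T ^ 2 ≤ s ^ 2 := by nlinarith
    have hfs : -(β / 2) * s ≤ f s := by
      have h1 := hdis s
      have := le_of_mul_le_mul_right (show (-(β/2)*s) * (-s) ≤ f s * (-s) by nlinarith)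
        (show (0:ℝ) < -s by linarith)
      linarith [this]
    have has := hbnd s
    rw [hg]
    have : -(β / (2 * lp)) * s = (-(β * s * lp)) / (2 * lp * lp) := by
      field_simp
      try tauto
    rw [this, div_le_div_iff₀ (by positivity) (hap s)]
    nlinarith [mul_le_mul_of_nonneg_left has.2 (show (0:ℝ) ≤ β * (-s) * lp from le_of_lt (mul_pos (mul_pos hβ (by linarith : (0:ℝ) < -s)) hlp)),
      mul_le_mul_of_nonneg_right hfs (show (0:ℝ) ≤ 2 * lp * lp by positivity)]
  -- bound on the right
  have hright : ∀ y, T ≤ y → G y ≤ G T - (β / (4 * lp)) * (y ^ 2 - T ^ 2) := by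
    intro y hy
    have hsplit := intervalIntegral.integral_add_adjacent_intervals (hgint 0 T) (hgint T y)
    have hle : (∫ s in T..y, g s) ≤ ∫ s in T..y, -(β / (2 * lp)) * s :=
      intervalIntegral.integral_mono_on hy (hgint T y)
        ((continuous_const.mul continuous_id).intervalIntegrable T y)
        (fun s hs => claim_pos s hs.1)
    have hcomp : (∫ s in T..y, -(β / (2 * lp)) * s) = -(β / (4 * lp)) * (y ^ 2 - T ^ 2) := by
      rw [intervalIntegral.integral_const_mul, integral_id]
      field_simp
      ring_nf
      try tauto
    have : G y = G T + ∫ s in T..y, g s := by rw [hsplit]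
    rw [this]; rw [hcomp] at hle; linarith
  -- bound on the left
  have hleft : ∀ y, y ≤ -T → G y ≤ G (-T) - (β / (4 * lp)) * (y ^ 2 - T ^ 2) := by
    intro y hy
    have hsplit := intervalIntegral.integral_add_adjacent_intervals (hgint 0 y) (hgint y (-T))
    have hle : (∫ s in y..(-T), -(β / (2 * lp)) * s) ≤ ∫ s in y..(-T), g s :=
      intervalIntegral.integral_mono_on hy
        ((continuous_const.mul continuous_id).intervalIntegrable y (-T)) (hgint y (-T))
        (fun s hs => claim_neg s hs.2)
    have hcomp : (∫ s in y..(-T), -(β / (2 * lp)) * s) = (β / (4 * lp)) * (y ^ 2 - T ^ 2) := by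
      rw [intervalIntegral.integral_const_mul, integral_id]
      field_simp
      ring_nf
      try tauto
    have hGy : G y = G (-T) - ∫ s in y..(-T), g s := by
      have : G y + ∫ s in y..(-T), g s = G (-T) := hsplit
      linarith
    rw [hGy]; rw [hcomp] at hle; linarith
  -- bound in the middle
  obtain ⟨x0, hx0mem, hx0⟩ :=
    (isCompact_Icc (a := -T) (b := T)).exists_isMaxOn
      (Set.nonempty_Icc.mpr (by linarith)) hGc.continuousOn
  set M : ℝ := G x0 with hM
  have hmid : ∀ y ∈ Set.Icc (-T) T, G y ≤ M := fun y hy => hx0 hy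
  refine ⟨max M (max (G T) (G (-T))) + (β / (4 * lp)) * T ^ 2, fun y => ?_⟩
  have hε : 0 < β / (4 * lp) := by positivity
  by_cases h1 : T ≤ y
  · have := hright y h1
    have h2 : G T ≤ max M (max (G T) (G (-T))) := le_max_of_le_right (le_max_left _ _)
    nlinarith
  · by_cases h2 : y ≤ -T
    · have := hleft y h2
      have h3 : G (-T) ≤ max M (max (G T) (G (-T))) := le_max_of_le_right (le_max_right _ _)
      nlinarith
    · push_neg at h1 h2
      have hy2 : y ^ 2 ≤ T ^ 2 := by nlinarith
      have := hmid y ⟨h2.le, h1.le⟩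
      have h4 : M ≤ max M (max (G T) (G (-T))) := le_max_left _ _
      nlinarith

lemma liouville (a f : ℝ → ℝ) (lm lp β C : ℝ)
    (hac : Continuous a) (hfc : Continuous f)
    (hlm : 0 < lm) (hbnd : ∀ y, lm ≤ a y ∧ a y ≤ lp)
    (hβ : 0 < β) (hC : 0 < C) (hdis : ∀ y, f y * y ≤ -β * y ^ 2 + C)
    (w : ℝ → ℝ) (hw : ContDiff ℝ 2 w)
    (heq : ∀ y, a y * deriv (deriv w) y + f y * deriv w y = 0)
    (hpoly : ∃ K : ℝ, ∃ m : ℕ, ∀ y, |w y| ≤ K * (1 + |y| ^ m)) :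
    ∃ c : ℝ, ∀ y, w y = c := by
  have hlp : 0 < lp := lt_of_lt_of_le hlm (le_trans (hbnd 0).1 (hbnd 0).2)
  have hap : ∀ s, 0 < a s := fun s => lt_of_lt_of_le hlm (hbnd s).1
  have hw2 : ContDiff ℝ (1+1) w := by norm_num; exact hw
  have hwd : Differentiable ℝ w := hw2.differentiable (by norm_num)
  have hud : Differentiable ℝ (deriv w) :=
    ((contDiff_succ_iff_deriv.mp hw2).2.2).differentiable (by norm_num)
  have huc : Continuous (deriv w) := hud.continuous
  set u : ℝ → ℝ := deriv w with hu
  set g : ℝ → ℝ := fun s => f s / a s with hg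
  have hgc : Continuous g := hfc.div hac fun s => (hap s).ne'
  set G : ℝ → ℝ := fun y => ∫ s in (0:ℝ)..y, g s with hGdef
  have hGd : ∀ y, HasDerivAt G (g y) y := fun y =>
    intervalIntegral.integral_hasDerivAt_right (hgc.intervalIntegrable 0 y)
      hgc.stronglyMeasurable.stronglyMeasurableAtFilter hgc.continuousAt
  -- the function u * exp ∘ G has zero derivative
  have hφd : ∀ y, HasDerivAt (fun t => u t * Real.exp (G t)) 0 y := by
    intro y
    have h1 : HasDerivAt u (deriv u y) y := (hud y).hasDerivAt
    have h2 : HasDerivAt (fun t => Real.exp (G t)) (Real.exp (G y) * g y) y := (hGd y).exp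
    have h3 := h1.mul h2
    have h4 : deriv u y = -(g y) * u y := by
      have h5 := heq y
      have h6 : a y ≠ 0 := (hap y).ne'
      rw [hg]
      field_simp
      linarith
    have h7 : deriv u y * Real.exp (G y) + u y * (Real.exp (G y) * g y) = 0 := by rw [h4]; ring
    rw [h7] at h3
    exact h3
  have hφconst : ∀ y, u y * Real.exp (G y) = u 0 := by
    intro y
    have hdiff : Differentiable ℝ (fun t => u t * Real.exp (G t)) :=
      fun t => (hφd t).differentiableAt
    have hconst := is_const_of_deriv_eq_zero hdiff (fun t => (hφd t).deriv) y 0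
    simpa [hGdef, intervalIntegral.integral_same] using hconst
  have key : ∀ y, u y = u 0 * Real.exp (-(G y)) := by
    intro y
    have h := hφconst y
    have he : Real.exp (G y) ≠ 0 := (Real.exp_pos _).ne'
    rw [Real.exp_neg]
    field_simp
    linarith [h]
  by_cases h0 : u 0 = 0
  · refine ⟨w 0, fun y => is_const_of_deriv_eq_zero hwd (fun x => by
      rw [← hu, key x, h0, zero_mul]) y 0⟩
  · exfalso
    obtain ⟨K, m, hKm⟩ := hpoly
    have hK : 0 ≤ K := by
      nlinarith [hKm 0, abs_nonneg (w 0), pow_nonneg (abs_nonneg (0:ℝ)) m]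
    obtain ⟨B, hB⟩ := G_bound a f lm lp β C hac hfc hlm hbnd hβ hC hdis
    set ε : ℝ := β / (4 * lp) with hε
    have hεpos : 0 < ε := by positivity
    -- FTC
    have hftc : ∀ y : ℝ, w y - w 0 = ∫ s in (0:ℝ)..y, u s := by
      intro y
      rw [intervalIntegral.integral_eq_sub_of_hasDerivAt
        (fun s _ => (hwd s).hasDerivAt) (huc.intervalIntegrable 0 y)]
    have hexp_cont : Continuous fun s => Real.exp (-(G s)) := by
      have hGc : Continuous G := continuous_iff_continuousAt.mpr fun y => (hGd y).continuousAt
      exact Real.continuous_exp.comp hGc.neg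
    -- main lower bound for y ≥ 1
    have hmain : ∀ y : ℝ, 1 ≤ y →
        |u 0| * Real.exp (ε * (y - 1) ^ 2 - B) ≤ K * (1 + y ^ m) + 2 * K := by
      intro y hy
      have hI : ∀ x z : ℝ, (∫ s in x..z, u s) = u 0 * ∫ s in x..z, Real.exp (-(G s)) := by
        intro x z
        rw [← intervalIntegral.integral_const_mul]
        exact intervalIntegral.integral_congr fun s _ => key s
      have hInonneg : (0:ℝ) ≤ ∫ s in (0:ℝ)..(y-1), Real.exp (-(G s)) :=
        intervalIntegral.integral_nonneg (by linarith) (fun s _ => (Real.exp_pos _).le)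
      have hslice : Real.exp (ε * (y - 1) ^ 2 - B) ≤ ∫ s in (y-1)..y, Real.exp (-(G s)) := by
        have hmono : (∫ s in (y-1)..y, Real.exp (ε * (y - 1) ^ 2 - B)) ≤
            ∫ s in (y-1)..y, Real.exp (-(G s)) := by
          refine intervalIntegral.integral_mono_on (by linarith)
            (intervalIntegrable_const) (hexp_cont.intervalIntegrable _ _) ?_
          intro s hs
          apply Real.exp_le_exp.mpr
          have h1 := hB s
          have hs1 : y - 1 ≤ s := hs.1
          have hs2 : 0 ≤ y - 1 := by linarith
          have : (y - 1) ^ 2 ≤ s ^ 2 := by nlinarith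
          have : ε * (y-1)^2 ≤ ε * s ^ 2 := by nlinarith
          linarith
        rw [intervalIntegral.integral_const, smul_eq_mul] at hmono
        have : (y - (y - 1)) = 1 := by ring
        rw [this, one_mul] at hmono
        exact hmono
      have hItot : Real.exp (ε * (y - 1) ^ 2 - B) ≤ ∫ s in (0:ℝ)..y, Real.exp (-(G s)) := by
        have hadd := intervalIntegral.integral_add_adjacent_intervals
          (hexp_cont.intervalIntegrable 0 (y-1) (μ := volume))
          (hexp_cont.intervalIntegrable (y-1) y (μ := volume))
        rw [← hadd]
        linarith
      have hw0 : |w 0| ≤ 2 * K := by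
        have := hKm 0
        simp only [abs_zero] at this
        have hzp : (0:ℝ) ^ m ≤ 1 := pow_le_one₀ le_rfl zero_le_one
        nlinarith
      have hwy : |w y| ≤ K * (1 + y ^ m) := by
        have := hKm y
        rwa [abs_of_nonneg (by linarith : (0:ℝ) ≤ y)] at this
      have hlhs : |u 0| * Real.exp (ε * (y - 1) ^ 2 - B) ≤ |w y - w 0| := by
        rw [hftc y, hI 0 y, abs_mul]
        have hInn : (0:ℝ) ≤ ∫ s in (0:ℝ)..y, Real.exp (-(G s)) := le_trans (Real.exp_pos _).le hItot
        rw [abs_of_nonneg hInn]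
        exact mul_le_mul_of_nonneg_left hItot (abs_nonneg _)
      calc |u 0| * Real.exp (ε * (y - 1) ^ 2 - B) ≤ |w y - w 0| := hlhs
        _ ≤ |w y| + |w 0| := abs_sub _ _
        _ ≤ K * (1 + y ^ m) + 2 * K := by linarith
    -- contradiction with polynomial growth
    have hc1 : 0 < |u 0| * Real.exp (-B) := by
      have := abs_pos.mpr h0
      positivity
    set c₁ : ℝ := |u 0| * Real.exp (-B) with hc₁
    have hlo := Real.isLittleO_pow_exp_atTop (n := m)
    have h2 : ∀ᶠ y : ℝ in atTop, (4 * K + 1) * y ^ m ≤ (c₁ / 2) * Real.exp y := by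
      have hc : 0 < (c₁ / 2) / (4 * K + 1) := by positivity
      filter_upwards [hlo.def hc, eventually_ge_atTop (0:ℝ)] with y hy hy0
      rw [Real.norm_eq_abs, Real.norm_eq_abs, abs_of_nonneg (pow_nonneg hy0 m),
        abs_of_nonneg (Real.exp_pos _).le] at hy
      have h3K : (0:ℝ) < 4 * K + 1 := by linarith
      calc (4 * K + 1) * y ^ m ≤ (4 * K + 1) * (c₁ / 2 / (4 * K + 1) * Real.exp y) :=
            mul_le_mul_of_nonneg_left hy h3K.le
        _ = (c₁ / 2) * Real.exp y := by field_simp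
    have h3 : ∀ᶠ y : ℝ in atTop, Real.exp y ≤ Real.exp (ε * (y - 1) ^ 2) := by
      filter_upwards [eventually_ge_atTop (1 + max 1 (2 / ε))] with y hy
      apply Real.exp_le_exp.mpr
      have hy1 : 1 ≤ y - 1 := le_trans (le_max_left _ _) (by linarith)
      have hy2 : 2 / ε ≤ y - 1 := le_trans (le_max_right _ _) (by linarith)
      have h2e : 2 ≤ ε * (y - 1) := by
        rw [div_le_iff₀ hεpos] at hy2
        nlinarith [hy2]
      nlinarith
    have h1 : ∀ᶠ y : ℝ in atTop, K * (1 + y ^ m) + 2 * K ≤ (4 * K + 1) * y ^ m := by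
      filter_upwards [eventually_ge_atTop (1:ℝ)] with y hy
      have hym : (1:ℝ) ≤ y ^ m := one_le_pow₀ hy
      nlinarith [mul_nonneg hK (sub_nonneg.mpr hym)]
    obtain ⟨y, ⟨hy1, hy2, hy3⟩, hyge⟩ :=
      ((h1.and (h2.and h3)).and (eventually_ge_atTop (1:ℝ))).exists
    have hm := hmain y hyge
    have hexpand : |u 0| * Real.exp (ε * (y - 1) ^ 2 - B) = c₁ * Real.exp (ε * (y - 1) ^ 2) := by
      rw [hc₁, Real.exp_sub, Real.exp_neg]
      field_simp [Real.exp_ne_zero]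
    rw [hexpand] at hm
    have hchain : c₁ * Real.exp (ε * (y - 1) ^ 2) ≤ (c₁ / 2) * Real.exp (ε * (y - 1) ^ 2) := by
      calc c₁ * Real.exp (ε * (y - 1) ^ 2) ≤ K * (1 + y ^ m) + 2 * K := hm
        _ ≤ (4 * K + 1) * y ^ m := hy1
        _ ≤ (c₁ / 2) * Real.exp y := hy2
        _ ≤ (c₁ / 2) * Real.exp (ε * (y - 1) ^ 2) := by
            exact mul_le_mul_of_nonneg_left hy3 (by positivity)
    nlinarith [Real.exp_pos (ε * (y - 1) ^ 2), hc1]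

lemma pi_facts (a f : ℝ → ℝ) (lm lp β C : ℝ)
    (hac : Continuous a) (hfc : Continuous f)
    (hlm : 0 < lm) (hbnd : ∀ y, lm ≤ a y ∧ a y ≤ lp)
    (hβ : 0 < β) (hC : 0 < C) (hdis : ∀ y, f y * y ≤ -β * y ^ 2 + C) :
    Integrable (piDen a f) ∧ (∫ y, piDen a f y) = 1 ∧ (∀ y, 0 ≤ piDen a f y) ∧
    Continuous (piDen a f) ∧
    ∃ D : ℝ, 0 ≤ D ∧ ∀ y, piDen a f y ≤ D * Real.exp (-(β / (4 * lp)) * y ^ 2) := by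
  have hlp : 0 < lp := lt_of_lt_of_le hlm (le_trans (hbnd 0).1 (hbnd 0).2)
  have hap : ∀ s, 0 < a s := fun s => lt_of_lt_of_le hlm (hbnd s).1
  have hεpos : 0 < β / (4 * lp) := by positivity
  obtain ⟨B, hB⟩ := G_bound a f lm lp β C hac hfc hlm hbnd hβ hC hdis
  set g : ℝ → ℝ := fun s => f s / a s with hg
  have hgc : Continuous g := hfc.div hac fun s => (hap s).ne'
  have hGd : ∀ y, HasDerivAt (fun t => ∫ s in (0:ℝ)..t, g s) (g y) y := fun y =>
    intervalIntegral.integral_hasDerivAt_right (hgc.intervalIntegrable 0 y)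
      hgc.stronglyMeasurable.stronglyMeasurableAtFilter hgc.continuousAt
  have hGc : Continuous (fun t => ∫ s in (0:ℝ)..t, g s) :=
    continuous_iff_continuousAt.mpr fun y => (hGd y).continuousAt
  have hρcont : Continuous (rho1 a f) :=
    (hac.inv₀ fun s => (hap s).ne').mul (Real.continuous_exp.comp hGc)
  have hρpos : ∀ y, 0 < rho1 a f y := fun y =>
    mul_pos (inv_pos.mpr (hap y)) (Real.exp_pos _)
  have hρle : ∀ y, rho1 a f y ≤
      (lm⁻¹ * Real.exp B) * Real.exp (-(β / (4 * lp)) * y ^ 2) := by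
    intro y
    have h1 : (a y)⁻¹ ≤ lm⁻¹ := inv_anti₀ hlm (hbnd y).1
    have h2 : Real.exp (∫ s in (0:ℝ)..y, f s / a s) ≤
        Real.exp B * Real.exp (-(β / (4 * lp)) * y ^ 2) := by
      rw [← Real.exp_add]
      apply Real.exp_le_exp.mpr
      have := hB y
      linarith
    calc rho1 a f y ≤ lm⁻¹ * (Real.exp B * Real.exp (-(β / (4 * lp)) * y ^ 2)) :=
          mul_le_mul h1 h2 (Real.exp_pos _).le (by positivity)
      _ = (lm⁻¹ * Real.exp B) * Real.exp (-(β / (4 * lp)) * y ^ 2) := by ring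
  have hρint : Integrable (rho1 a f) := by
    refine ((integrable_exp_neg_mul_sq hεpos).const_mul
      (lm⁻¹ * Real.exp B)).mono' hρcont.aestronglyMeasurable
      (Eventually.of_forall fun y => ?_)
    rw [Real.norm_eq_abs, abs_of_pos (hρpos y)]
    exact hρle y
  have hZpos : 0 < Z1 a f := by
    rw [Z1]
    refine (integral_pos_iff_support_of_nonneg (fun y => (hρpos y).le) hρint).mpr ?_
    have hs : Function.support (rho1 a f) = Set.univ :=
      Set.eq_univ_of_forall fun y => (hρpos y).ne'
    rw [hs]
    simp [Real.volume_univ]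
  have hπint : Integrable (piDen a f) := hρint.div_const _
  refine ⟨hπint, ?_, fun y => div_nonneg (hρpos y).le hZpos.le,
    hρcont.div_const _, ⟨lm⁻¹ * Real.exp B / Z1 a f, by positivity, fun y => ?_⟩⟩
  · show (∫ y, rho1 a f y / Z1 a f) = 1
    rw [integral_div]
    exact div_self hZpos.ne'
  · show rho1 a f y / Z1 a f ≤ _
    rw [div_le_iff₀ hZpos]
    have := hρle y
    have h3 : 0 < Real.exp (-(β / (4 * lp)) * y ^ 2) := Real.exp_pos _
    calc rho1 a f y ≤ (lm⁻¹ * Real.exp B) * Real.exp (-(β / (4 * lp)) * y ^ 2) := hρle y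
      _ = lm⁻¹ * Real.exp B / Z1 a f * Real.exp (-(β / (4 * lp)) * y ^ 2) * Z1 a f := by
          field_simp


/-- Liouville property of `Lw = a w'' + f w'` in the class of
polynomially growing functions, and uniqueness, up to constants, of polynomially
growing solutions of the centered Poisson equation. -/
theorem one_dim_liouville_and_uniqueness
    (a f : ℝ → ℝ) (lm lp β C : ℝ)
    (hac : Continuous a) (hfc : Continuous f)
    (hlm : 0 < lm) (hbnd : ∀ y, lm ≤ a y ∧ a y ≤ lp)
    (hβ : 0 < β) (hC : 0 < C) (hdis : ∀ y, f y * y ≤ -β * y ^ 2 + C) :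
    (∀ w : ℝ → ℝ, ContDiff ℝ 2 w →
      (∀ y, a y * deriv (deriv w) y + f y * deriv w y = 0) →
      (∃ K : ℝ, ∃ m : ℕ, ∀ y, |w y| ≤ K * (1 + |y| ^ m)) →
      ∃ c : ℝ, ∀ y, w y = c) ∧
    (∀ h : ℝ → ℝ, Continuous h →
      (∃ K : ℝ, ∃ m : ℕ, ∀ y, |h y| ≤ K * (1 + |y| ^ m)) →
      ∀ v₁ v₂ : ℝ → ℝ, ContDiff ℝ 2 v₁ → ContDiff ℝ 2 v₂ →
        (∃ K : ℝ, ∃ m : ℕ, ∀ y, |v₁ y| ≤ K * (1 + |y| ^ m)) →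
        (∃ K : ℝ, ∃ m : ℕ, ∀ y, |v₂ y| ≤ K * (1 + |y| ^ m)) →
        (∀ y, a y * deriv (deriv v₁) y + f y * deriv v₁ y = h y - hbar a f h) →
        (∀ y, a y * deriv (deriv v₂) y + f y * deriv v₂ y = h y - hbar a f h) →
        (∃ c : ℝ, ∀ y, v₁ y - v₂ y = c) ∧
          ((∫ y, v₁ y * piDen a f y) = 0 → (∫ y, v₂ y * piDen a f y) = 0 → v₁ = v₂)) := by
  have hlp : 0 < lp := lt_of_lt_of_le hlm (le_trans (hbnd 0).1 (hbnd 0).2)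
  constructor
  · intro w hw heq hpoly
    exact liouville a f lm lp β C hac hfc hlm hbnd hβ hC hdis w hw heq hpoly
  · intro h hhc hhpoly v₁ v₂ hv1 hv2 hp1 hp2 he1 he2
    have hd1 : Differentiable ℝ v₁ := hv1.differentiable (by norm_num)
    have hd2 : Differentiable ℝ v₂ := hv2.differentiable (by norm_num)
    have hv1' : ContDiff ℝ (1+1) v₁ := by norm_num; exact hv1
    have hv2' : ContDiff ℝ (1+1) v₂ := by norm_num; exact hv2
    have hd1' : Differentiable ℝ (deriv v₁) :=
      ((contDiff_succ_iff_deriv.mp hv1').2.2).differentiable (by norm_num)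
    have hd2' : Differentiable ℝ (deriv v₂) :=
      ((contDiff_succ_iff_deriv.mp hv2').2.2).differentiable (by norm_num)
    set w : ℝ → ℝ := fun y => v₁ y - v₂ y with hwdef
    have hwc : ContDiff ℝ 2 w := hv1.sub hv2
    have hderiv_w : deriv w = fun y => deriv v₁ y - deriv v₂ y :=
      funext fun y => deriv_sub (hd1 y) (hd2 y)
    have heq0 : ∀ y, a y * deriv (deriv w) y + f y * deriv w y = 0 := by
      intro y
      have h2 : deriv (deriv w) y = deriv (deriv v₁) y - deriv (deriv v₂) y := by
        rw [hderiv_w]; exact deriv_sub (hd1' y) (hd2' y)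
      have h3 : deriv w y = deriv v₁ y - deriv v₂ y := by rw [hderiv_w]
      rw [h2, h3]
      linarith [he1 y, he2 y]
    obtain ⟨K₁, m₁, hK1⟩ := hp1
    obtain ⟨K₂, m₂, hK2⟩ := hp2
    have hK1n : 0 ≤ K₁ := by
      nlinarith [hK1 0, abs_nonneg (v₁ 0), pow_nonneg (abs_nonneg (0:ℝ)) m₁]
    have hK2n : 0 ≤ K₂ := by
      nlinarith [hK2 0, abs_nonneg (v₂ 0), pow_nonneg (abs_nonneg (0:ℝ)) m₂]
    have hpolyw : ∃ K : ℝ, ∃ m : ℕ, ∀ y, |w y| ≤ K * (1 + |y| ^ m) := by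
      refine ⟨2 * (K₁ + K₂), max m₁ m₂, fun y => ?_⟩
      have t1 := hK1 y
      have t2 := hK2 y
      have p1 := poly_mono (y := y) (le_max_left m₁ m₂)
      have p2 := poly_mono (y := y) (le_max_right m₁ m₂)
      have habs : |w y| ≤ |v₁ y| + |v₂ y| := abs_sub _ _
      nlinarith [mul_le_mul_of_nonneg_left p1 hK1n, mul_le_mul_of_nonneg_left p2 hK2n]
    obtain ⟨c, hc⟩ := liouville a f lm lp β C hac hfc hlm hbnd hβ hC hdis w hwc heq0 hpolyw
    refine ⟨⟨c, hc⟩, ?_⟩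
    intro hI1 hI2
    obtain ⟨hπint, hπ1, hπnn, hπcont, D, hD, hπle⟩ :=
      pi_facts a f lm lp β C hac hfc hlm hbnd hβ hC hdis
    have hεpos : 0 < β / (4 * lp) := by positivity
    have hint2 : Integrable (fun y => v₂ y * piDen a f y) := by
      refine ((gaussInt hεpos m₂).const_mul (K₂ * D)).mono'
        ((hv2.continuous.mul hπcont).aestronglyMeasurable)
        (Filter.Eventually.of_forall fun y => ?_)
      rw [Real.norm_eq_abs, abs_mul, abs_of_nonneg (hπnn y)]
      calc |v₂ y| * piDen a f y
          ≤ (K₂ * (1 + |y| ^ m₂)) * (D * Real.exp (-(β / (4 * lp)) * y ^ 2)) :=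
            mul_le_mul (hK2 y) (hπle y) (hπnn y) (le_trans (abs_nonneg _) (hK2 y))
        _ = K₂ * D * ((1 + |y| ^ m₂) * Real.exp (-(β / (4 * lp)) * y ^ 2)) := by ring
    have hveq : ∀ y, v₁ y = v₂ y + c := by
      intro y
      have hcy := hc y
      simp only [hwdef] at hcy
      linarith
    have hsum : (∫ y, v₁ y * piDen a f y)
        = (∫ y, v₂ y * piDen a f y) + c * ∫ y, piDen a f y := by
      rw [← integral_const_mul, ← integral_add hint2 (hπint.const_mul c)]
      refine integral_congr_ae (Filter.Eventually.of_forall fun y => ?_)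
      show v₁ y * piDen a f y = v₂ y * piDen a f y + c * piDen a f y
      rw [hveq y]; ring
    rw [hI1, hI2, hπ1] at hsum
    have hc0 : c = 0 := by linarith
    funext y
    have hy := hc y
    simp only [hwdef, hc0] at hy
    linarith

end
end
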